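/- (Medini–Vidnyánszky; in ZFC) There exists a zero-dimensional separable metrizable space X (which may be taken to be a subspace of the Cantor space 2^ω) that is not σ-homogeneous: X cannot be written as a countable union of homogeneous subspaces. -/

import Mathlib

open TopologicalSpace MeasureTheory Topology

/-- A space is *homogeneous* if its homeomorphism group acts transitively. -/
def HomogeneousSpace (X : Type*) [TopologicalSpace X] : Prop :=
  ∀ x y : X, ∃ h : X ≃ₜ X, h x = y

/-- A subset is a *homogeneous subspace* if it is homogeneous in the subspace topology. -/
def HomogeneousSubspace {X : Type*} [TopologicalSpace X] (S : Set X) : Prop :=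
  ∀ x y : S, ∃ h : ↥S ≃ₜ ↥S, h x = y

/-- A space is *zero-dimensional* if the clopen sets form a base. -/
def ZeroDimensionalSpace (X : Type*) [TopologicalSpace X] : Prop :=
  IsTopologicalBasis {s : Set X | IsClopen s}

/-- A space is *analytic* if it embeds onto an analytic subset of some Polish space. -/
def AnalyticSpace (X : Type*) [tX : TopologicalSpace X] : Prop :=
  ∃ (Z : Type) (tZ : TopologicalSpace Z), @PolishSpace Z tZ ∧
    ∃ j : X → Z, @IsEmbedding X Z tX tZ j ∧ @AnalyticSet Z tZ (Set.range j)

/-- A space is *coanalytic* if it embeds onto the complement of an analytic subset of some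
Polish space. -/
def CoanalyticSpace (X : Type*) [tX : TopologicalSpace X] : Prop :=
  ∃ (Z : Type) (tZ : TopologicalSpace Z), @PolishSpace Z tZ ∧
    ∃ j : X → Z, @IsEmbedding X Z tX tZ j ∧ @AnalyticSet Z tZ (Set.range j)ᶜ

/-- A space is *Borel* if it embeds onto a Borel subset of some Polish space. -/
def BorelSpacePaper (X : Type*) [tX : TopologicalSpace X] : Prop :=
  ∃ (Z : Type) (tZ : TopologicalSpace Z), @PolishSpace Z tZ ∧
    ∃ j : X → Z, @IsEmbedding X Z tX tZ j ∧ @MeasurableSet Z (@borel Z tZ) (Set.range j)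

/-- `A ∈ Σ¹₁(X)`: for some embedding `j` of `X` into a Polish space `Z`, `j '' A` is the
trace on `j '' X` of an analytic subset of `Z`. -/
def RelativelyAnalytic {X : Type*} [tX : TopologicalSpace X] (A : Set X) : Prop :=
  ∃ (Z : Type) (tZ : TopologicalSpace Z), @PolishSpace Z tZ ∧
    ∃ j : X → Z, @IsEmbedding X Z tX tZ j ∧
      ∃ A' : Set Z, @AnalyticSet Z tZ A' ∧ j '' A = A' ∩ Set.range j

/-- A subset of a space is `Σ¹₂` if it is a continuous image of a coanalytic subset of a
Polish space. -/
def Sigma12Set {Z : Type*} [tZ : TopologicalSpace Z] (s : Set Z) : Prop :=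
  ∃ (W : Type) (tW : TopologicalSpace W), @PolishSpace W tW ∧
    ∃ (C : Set W) (f : W → Z), @AnalyticSet W tW Cᶜ ∧ @ContinuousOn W Z tW tZ f C ∧ f '' C = s

/-- `A ∈ Δ¹₂(X)`: for some embedding `j` of `X` into a Polish space `Z`, both `j '' A` and
`j '' Aᶜ` are traces on `j '' X` of `Σ¹₂` subsets of `Z`. -/
def RelativelyDelta12 {X : Type*} [tX : TopologicalSpace X] (A : Set X) : Prop :=
  ∃ (Z : Type) (tZ : TopologicalSpace Z), @PolishSpace Z tZ ∧
    ∃ j : X → Z, @IsEmbedding X Z tX tZ j ∧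
      (∃ A' : Set Z, @Sigma12Set Z tZ A' ∧ j '' A = A' ∩ Set.range j) ∧
      (∃ B' : Set Z, @Sigma12Set Z tZ B' ∧ j '' Aᶜ = B' ∩ Set.range j)

/-- A space is *meager* if it is a meager subset of itself. -/
def MeagerSpace (X : Type*) [TopologicalSpace X] : Prop :=
  IsMeagre (Set.univ : Set X)

/-- A space is *Baire* if no non-empty open subset of it is meager (the definition used in
the paper). -/
def PaperBaireSpace (X : Type*) [TopologicalSpace X] : Prop :=
  ∀ U : Set X, IsOpen U → U.Nonempty → ¬ IsMeagre U

/-- A space is *nowhere countable* if it is non-empty and no non-empty open subset of it is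
countable. -/
def NowhereCountable (X : Type*) [TopologicalSpace X] : Prop :=
  Nonempty X ∧ ∀ U : Set X, IsOpen U → U.Nonempty → ¬ U.Countable

/-- The iterated Cantor–Bendixson derivative of a space: `cbDeriv X 0 = X`,
`cbDeriv X (ξ+1)` is `cbDeriv X ξ` minus its isolated points, and intersections are taken
at limit stages. -/
noncomputable def cbDeriv (X : Type*) [TopologicalSpace X] (o : Ordinal.{0}) : Set X :=
  Ordinal.limitRecOn o Set.univ
    (fun _ ih => {x ∈ ih | x ∈ closure (ih \ {x})})
    (fun o _ ih => ⋂ (p : Set.Iio o), ih p.1 p.2)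

/-- A space is *scattered* if some iterated Cantor–Bendixson derivative of it is empty. -/
def ScatteredSpace (X : Type*) [TopologicalSpace X] : Prop :=
  ∃ o : Ordinal.{0}, cbDeriv X o = ∅

/-- A space is *n-discrete* if it is the union of `n` discrete subspaces. -/
def NDiscrete (n : ℕ) (X : Type*) [TopologicalSpace X] : Prop :=
  ∃ D : Fin n → Set X, (∀ k, DiscreteTopology ↥(D k)) ∧ ⋃ k, D k = Set.univ

/-- A space is *n-homogeneous* if it is the union of `n` homogeneous subspaces. -/
def NHomogeneous (n : ℕ) (X : Type*) [TopologicalSpace X] : Prop :=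
  ∃ Y : Fin n → Set X, (∀ k, HomogeneousSubspace (Y k)) ∧ ⋃ k, Y k = Set.univ

/-- A space is *σ-homogeneous* if it is the union of countably many homogeneous
subspaces. -/
def SigmaHomogeneous (X : Type*) [TopologicalSpace X] : Prop :=
  ∃ Y : ℕ → Set X, (∀ n, HomogeneousSubspace (Y n)) ∧ ⋃ n, Y n = Set.univ

/-- An `Fσ` subset: a countable union of closed sets. -/
def IsFsigma {X : Type*} [TopologicalSpace X] (s : Set X) : Prop :=
  ∃ F : ℕ → Set X, (∀ n, IsClosed (F n)) ∧ s = ⋃ n, F n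

namespace MVAux
open Set Cardinal Filter



abbrev Cc : Type := ℕ → Bool

lemma mk_Cc : #Cc = Cardinal.continuum := by
  rw [Cardinal.mk_arrow, Cardinal.mk_bool, Cardinal.mk_nat, Cardinal.lift_aleph0,
    Cardinal.continuum, Cardinal.lift_ofNat]

/-- closure of the range of a code -/
def Gr (p : ℕ → Cc × Cc) : Set (Cc × Cc) := closure (Set.range p)

/-- The (graph of the) injective partial function coded by `p`. -/
def graphOf (p : ℕ → Cc × Cc) : Set (Cc × Cc) :=
  {q | q ∈ Gr p ∧ (∀ y, (q.1, y) ∈ Gr p → y = q.2) ∧ ∀ x, (x, q.2) ∈ Gr p → x = q.1}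

lemma graphOf_right_unique {p : ℕ → Cc × Cc} {x y y' : Cc}
    (h : (x, y) ∈ graphOf p) (h' : (x, y') ∈ graphOf p) : y = y' :=
  (h.2.1 y' h'.1).symm

lemma graphOf_left_unique {p : ℕ → Cc × Cc} {x x' y : Cc}
    (h : (x, y) ∈ graphOf p) (h' : (x', y) ∈ graphOf p) : x = x' :=
  (h.2.2 x' h'.1).symm

/-- Every autohomeomorphism of a subspace of the Cantor set is contained in a coded
injective partial function. -/
lemma exists_code (S : Set Cc) (h : ↥S ≃ₜ ↥S) :
    ∃ p : ℕ → Cc × Cc, ∀ z : ↥S, ((z : Cc), ((h z : Cc))) ∈ graphOf p := by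
  rcases isEmpty_or_nonempty ↥S with hS | hS
  · exact ⟨fun _ => (fun _ => false, fun _ => false), fun z => (hS.elim z)⟩
  · set u : ℕ → ↥S := TopologicalSpace.denseSeq ↥S with hu_def
    have hu : DenseRange u := TopologicalSpace.denseRange_denseSeq ↥S
    set k : ↥S → Cc × Cc := fun w => ((w : Cc), ((h w : Cc))) with hk
    have hkc : Continuous k := by
      exact (continuous_subtype_val).prodMk (continuous_subtype_val.comp h.continuous)
    refine ⟨k ∘ u, fun z => ?_⟩
    have hGr : ∀ w : ↥S, k w ∈ Gr (k ∘ u) := by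
      intro w
      have h1 : w ∈ closure (Set.range u) := by
        rw [hu.closure_range]; trivial
      have h2 : k w ∈ k '' closure (Set.range u) := Set.mem_image_of_mem k h1
      have h3 := image_closure_subset_closure_image hkc h2
      have : k '' Set.range u = Set.range (k ∘ u) := (Set.range_comp k u).symm
      rwa [this] at h3
    -- sequence extraction helper
    have seq : ∀ q : Cc × Cc, q ∈ Gr (k ∘ u) →
        ∃ n : ℕ → ℕ, Tendsto (fun m => k (u (n m))) atTop (nhds q) := by
      intro q hq
      obtain ⟨w, hw1, hw2⟩ := mem_closure_iff_seq_limit.1 hq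
      choose n hn using hw1
      refine ⟨n, ?_⟩
      have : (fun m => k (u (n m))) = w := funext fun m => hn m
      rw [this]; exact hw2
    refine ⟨hGr z, ?_, ?_⟩
    · intro y hy
      obtain ⟨n, hn⟩ := seq _ hy
      have hfst : Tendsto (fun m => ((u (n m) : Cc))) atTop (nhds (z : Cc)) :=
        (continuous_fst.tendsto _).comp hn
      have hsnd : Tendsto (fun m => ((h (u (n m)) : Cc))) atTop (nhds y) :=
        (continuous_snd.tendsto _).comp hn
      have hsub : Tendsto (fun m => u (n m)) atTop (nhds z) := by
        rw [tendsto_subtype_rng]; exact hfst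
      have : Tendsto (fun m => h (u (n m))) atTop (nhds (h z)) :=
        (h.continuous.tendsto z).comp hsub
      have h2 : Tendsto (fun m => ((h (u (n m)) : Cc))) atTop (nhds ((h z : Cc))) :=
        (continuous_subtype_val.tendsto _).comp this
      exact tendsto_nhds_unique hsnd h2
    · intro x hx
      obtain ⟨n, hn⟩ := seq _ hx
      have hfst : Tendsto (fun m => ((u (n m) : Cc))) atTop (nhds x) :=
        (continuous_fst.tendsto _).comp hn
      have hsnd : Tendsto (fun m => ((h (u (n m)) : Cc))) atTop (nhds ((h z : Cc))) :=
        (continuous_snd.tendsto _).comp hn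
      have hsub : Tendsto (fun m => h (u (n m))) atTop (nhds (h z)) := by
        rw [tendsto_subtype_rng]; exact hsnd
      have h1 : Tendsto (fun m => h.symm (h (u (n m)))) atTop (nhds (h.symm (h z))) :=
        (h.symm.continuous.tendsto _).comp hsub
      simp only [Homeomorph.symm_apply_apply] at h1
      have h2 : Tendsto (fun m => ((u (n m) : Cc))) atTop (nhds ((z : Cc))) :=
        (continuous_subtype_val.tendsto _).comp h1
      exact tendsto_nhds_unique hfst h2


-- ### the index type
abbrev Idx : Type := (Cardinal.continuum.ord).ToType

lemma mk_Idx : #Idx = Cardinal.continuum := by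
  rw [Cardinal.mk_toType, Cardinal.card_ord]

lemma mk_Iio_Idx (i : Idx) : #(Set.Iio i) < Cardinal.continuum :=
  Cardinal.mk_Iio_ord_toType i

lemma mk_Iic_Idx (i : Idx) : #(Set.Iic i) < Cardinal.continuum := by
  have h1 : (Set.Iic i : Set Idx) = insert i (Set.Iio i) := by
    ext x; simp [le_iff_lt_or_eq, or_comm]
  rw [h1]
  have := Cardinal.mk_insert_le (s := Set.Iio i) (a := i)
  refine lt_of_le_of_lt this ?_
  exact Cardinal.add_lt_of_lt Cardinal.aleph0_le_continuum (mk_Iio_Idx i)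
    (lt_of_lt_of_le Cardinal.one_lt_aleph0 Cardinal.aleph0_le_continuum)

lemma mk_P : #(ℕ → Cc × Cc) = Cardinal.continuum := by
  rw [Cardinal.mk_arrow, Cardinal.mk_prod, Cardinal.lift_id, mk_Cc, Cardinal.lift_id,
    Cardinal.continuum_mul_self, Cardinal.mk_nat, Cardinal.lift_aleph0]
  exact Cardinal.continuum_power_aleph0

/-- A fixed bijective enumeration of all codes. -/
noncomputable def ψ : Idx ≃ (ℕ → Cc × Cc) :=
  Classical.choice (Cardinal.eq.1 (mk_Idx.trans mk_P.symm))

/-- The set of "forbidden" points at stage `i`, given the set `prev` of previously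
chosen points. -/
def Excl (i : Idx) (prev : Set Cc) : Set Cc :=
  prev ∪ ⋃ (q : (Set.Iic i) × prev),
    ({x | (x, (q.2 : Cc)) ∈ graphOf (ψ q.1)} ∪ {x | ((q.2 : Cc), x) ∈ graphOf (ψ q.1)})

lemma mk_Excl_lt (i : Idx) (prev : Set Cc) (hprev : #prev < Cardinal.continuum) :
    #(Excl i prev) < Cardinal.continuum := by
  have hsub : ∀ (p : ℕ → Cc × Cc) (y : Cc), Subsingleton {x | (x, y) ∈ graphOf p} := by
    intro p y
    constructor
    rintro ⟨x1, h1⟩ ⟨x2, h2⟩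
    exact Subtype.ext ((h1.2.2 x2 h2.1).symm)
  have hsub2 : ∀ (p : ℕ → Cc × Cc) (y : Cc), Subsingleton {x | (y, x) ∈ graphOf p} := by
    intro p y
    constructor
    rintro ⟨x1, h1⟩ ⟨x2, h2⟩
    exact Subtype.ext ((h1.2.1 x2 h2.1).symm)
  refine lt_of_le_of_lt (Cardinal.mk_union_le _ _) ?_
  refine Cardinal.add_lt_of_lt Cardinal.aleph0_le_continuum hprev ?_
  refine lt_of_le_of_lt (Cardinal.mk_iUnion_le_sum_mk) ?_
  refine lt_of_le_of_lt (Cardinal.sum_le_sum _ (fun _ => 2) ?_) ?_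
  · rintro ⟨j, y⟩
    refine le_trans (Cardinal.mk_union_le _ _) ?_
    have b1 : #{x | (x, (y : Cc)) ∈ graphOf (ψ j)} ≤ 1 := by
      have := hsub (ψ j) (y : Cc); exact Cardinal.mk_le_one_iff_set_subsingleton.2
        (Set.subsingleton_coe _ |>.1 this)
    have b2 : #{x | ((y : Cc), x) ∈ graphOf (ψ j)} ≤ 1 := by
      have := hsub2 (ψ j) (y : Cc); exact Cardinal.mk_le_one_iff_set_subsingleton.2
        (Set.subsingleton_coe _ |>.1 this)
    calc _ ≤ 1 + 1 := add_le_add b1 b2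
    _ = 2 := by norm_num
  · rw [Cardinal.sum_const']
    refine Cardinal.mul_lt_of_lt Cardinal.aleph0_le_continuum ?_ ?_
    · rw [Cardinal.mk_prod, Cardinal.lift_id, Cardinal.lift_id]
      exact Cardinal.mul_lt_of_lt Cardinal.aleph0_le_continuum (mk_Iic_Idx i) hprev
    · exact lt_of_lt_of_le (Cardinal.nat_lt_aleph0 2) Cardinal.aleph0_le_continuum

def prevSet (i : Idx) (v : ∀ j : Idx, j < i → Cc) : Set Cc :=
  {x | ∃ j : Idx, ∃ h : j < i, v j h = x}

lemma mk_prevSet_lt (i : Idx) (v : ∀ j : Idx, j < i → Cc) :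
    #(prevSet i v) < Cardinal.continuum := by
  have : prevSet i v = Set.range (fun j : Set.Iio i => v j.1 j.2) := by
    ext x
    constructor
    · rintro ⟨j, hj, rfl⟩; exact ⟨⟨j, hj⟩, rfl⟩
    · rintro ⟨⟨j, hj⟩, rfl⟩; exact ⟨j, hj, rfl⟩
  rw [this]
  exact lt_of_le_of_lt Cardinal.mk_range_le (mk_Iio_Idx i)

lemma exists_not_mem_Excl (i : Idx) (v : ∀ j : Idx, j < i → Cc) :
    ∃ x : Cc, x ∉ Excl i (prevSet i v) := by
  by_contra hc
  push_neg at hc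
  have h1 : (Set.univ : Set Cc) ⊆ Excl i (prevSet i v) := fun x _ => hc x
  have h2 : #Cc ≤ #(Excl i (prevSet i v)) := by
    calc #Cc = #(Set.univ : Set Cc) := Cardinal.mk_univ.symm
    _ ≤ _ := Cardinal.mk_le_mk_of_subset h1
  rw [mk_Cc] at h2
  exact absurd (lt_of_le_of_lt h2 (mk_Excl_lt i _ (mk_prevSet_lt i v))) (lt_irrefl _)

/-- The transfinite construction. -/
noncomputable def gfun : Idx → Cc :=
  (IsWellFounded.wf (r := ((· < ·) : Idx → Idx → Prop))).fix
    (fun i rec => Classical.choose (exists_not_mem_Excl i rec))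

lemma gfun_spec (i : Idx) :
    gfun i ∉ Excl i (prevSet i (fun j _ => gfun j)) := by
  have h := WellFounded.fix_eq
    (IsWellFounded.wf (r := ((· < ·) : Idx → Idx → Prop)))
    (fun i rec => Classical.choose (exists_not_mem_Excl i rec)) i
  have h2 := Classical.choose_spec (exists_not_mem_Excl i (fun j _ => gfun j))
  show gfun i ∉ _
  rw [show gfun i = Classical.choose (exists_not_mem_Excl i (fun j _ => gfun j)) from h]
  exact h2

lemma gfun_prev (i : Idx) : prevSet i (fun j _ => gfun j) = gfun '' Set.Iio i := by
  ext x
  constructor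
  · rintro ⟨j, hj, rfl⟩; exact ⟨j, hj, rfl⟩
  · rintro ⟨j, hj, rfl⟩; exact ⟨j, hj, rfl⟩

lemma gfun_inj : Function.Injective gfun := by
  intro a b hab
  by_contra hne
  rcases lt_or_gt_of_ne hne with h | h
  · exact gfun_spec b (Or.inl ⟨a, h, hab⟩)
  · exact gfun_spec a (Or.inl ⟨b, h, hab.symm⟩)

lemma no_bad {j i a : Idx} (hji : j ≤ i) (ha : a < i) :
    ((gfun i, gfun a) ∉ graphOf (ψ j)) ∧ ((gfun a, gfun i) ∉ graphOf (ψ j)) := by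
  have hprev : gfun a ∈ prevSet i (fun j _ => gfun j) := ⟨a, ha, rfl⟩
  constructor
  · intro hmem
    exact gfun_spec i (Or.inr (Set.mem_iUnion.2
      ⟨(⟨j, hji⟩, ⟨gfun a, hprev⟩), Or.inl hmem⟩))
  · intro hmem
    exact gfun_spec i (Or.inr (Set.mem_iUnion.2
      ⟨(⟨j, hji⟩, ⟨gfun a, hprev⟩), Or.inr hmem⟩))

/-- The rigid set. -/
def Xset : Set Cc := Set.range gfun

lemma mk_Xset : #Xset = Cardinal.continuum := by
  show #(Set.range gfun) = _
  rw [Cardinal.mk_range_eq _ gfun_inj, mk_Idx]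

lemma bad_small (p : ℕ → Cc × Cc) :
    #{x : Cc | x ∈ Xset ∧ ∃ y ∈ Xset, (x, y) ∈ graphOf p ∧ x ≠ y} < Cardinal.continuum := by
  obtain ⟨j₀, rfl⟩ : ∃ j₀, ψ j₀ = p := ⟨ψ.symm p, ψ.apply_symm_apply p⟩
  have hsub : {x : Cc | x ∈ Xset ∧ ∃ y ∈ Xset, (x, y) ∈ graphOf (ψ j₀) ∧ x ≠ y}
      ⊆ gfun '' Set.Iio j₀ := by
    rintro x ⟨⟨a, rfl⟩, y, ⟨b, rfl⟩, hg, hne⟩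
    have hab : a ≠ b := fun h => hne (congrArg gfun h)
    rcases lt_trichotomy a b with h | h | h
    · by_cases hb : j₀ ≤ b
      · exact absurd hg (no_bad hb h).2
      · exact ⟨a, lt_trans h (lt_of_not_ge hb), rfl⟩
    · exact absurd h hab
    · by_cases hA : j₀ ≤ a
      · exact absurd hg (no_bad hA h).1
      · exact ⟨a, lt_of_not_ge hA, rfl⟩
  refine lt_of_le_of_lt (Cardinal.mk_le_mk_of_subset hsub) ?_
  exact lt_of_le_of_lt Cardinal.mk_image_le (mk_Iio_Idx j₀)


-- cofinality of continuum
lemma aleph0_lt_cof_continuum : ℵ₀ < (Cardinal.continuum).ord.cof := by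
  by_contra hle
  push_neg at hle
  have h1 := Cardinal.lt_power_cof (Cardinal.aleph0_le_continuum)
  have h2 : Cardinal.continuum ^ (Cardinal.continuum.ord.cof) ≤ Cardinal.continuum ^ ℵ₀ :=
    Cardinal.power_le_power_left Cardinal.continuum_ne_zero hle
  rw [Cardinal.continuum_power_aleph0] at h2
  exact absurd (lt_of_lt_of_le h1 h2) (lt_irrefl _)

/-- Main topological lemma: a homogeneous subspace of a rigid set is small. -/
lemma homog_lt (X : Set Cc)
    (hX : ∀ p : ℕ → Cc × Cc,
      #{x : Cc | x ∈ X ∧ ∃ y ∈ X, (x, y) ∈ graphOf p ∧ x ≠ y} < Cardinal.continuum)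
    (S : Set Cc) (hSX : S ⊆ X) (hs : HomogeneousSubspace S) :
    #S < Cardinal.continuum := by
  by_cases hsing : Subsingleton ↥S
  · have : #S ≤ 1 := Cardinal.le_one_iff_subsingleton.2 hsing
    exact lt_of_le_of_lt this
      (lt_of_lt_of_le Cardinal.one_lt_aleph0 Cardinal.aleph0_le_continuum)
  · have : ∃ a b : ↥S, a ≠ b := by
      by_contra hcon
      push_neg at hcon
      exact hsing ⟨hcon⟩
    obtain ⟨a, b, hab⟩ := this
    obtain ⟨h₀, hh₀⟩ := hs a b
    obtain ⟨p, hp⟩ := exists_code S h₀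
    set M : Set ↥S := {z | h₀ z ≠ z} with hM
    have hMopen : IsOpen M := isOpen_ne_fun h₀.continuous continuous_id
    have haM : a ∈ M := by
      show h₀ a ≠ a
      rw [hh₀]; exact fun h => hab h.symm
    have hMlt : #M < Cardinal.continuum := by
      have hmem : ∀ z : M, ((z : ↥S) : Cc) ∈
          {x : Cc | x ∈ X ∧ ∃ y ∈ X, (x, y) ∈ graphOf p ∧ x ≠ y} := by
        rintro ⟨z, hz⟩
        refine ⟨hSX z.2, ((h₀ z : ↥S) : Cc), hSX (h₀ z).2, hp z, ?_⟩
        intro heq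
        exact hz (Subtype.ext heq.symm)
      have : #M ≤ #{x : Cc | x ∈ X ∧ ∃ y ∈ X, (x, y) ∈ graphOf p ∧ x ≠ y} :=
        Cardinal.mk_le_of_injective (f := fun z : M =>
          (⟨((z : ↥S) : Cc), hmem z⟩ : {x : Cc | x ∈ X ∧ ∃ y ∈ X, (x, y) ∈ graphOf p ∧ x ≠ y}))
          (by
            intro z1 z2 h12
            have h13 : ((z1 : ↥S) : Cc) = ((z2 : ↥S) : Cc) := by simpa using congrArg Subtype.val h12
            exact Subtype.ext (Subtype.ext h13))
      exact lt_of_le_of_lt this (hX p)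
    -- every point has a small open neighborhood
    have hnbhd : ∀ w : ↥S, ∃ U : Set ↥S, IsOpen U ∧ w ∈ U ∧ #U < Cardinal.continuum := by
      intro w
      obtain ⟨g, hg⟩ := hs a w
      refine ⟨g '' M, g.isOpenMap M hMopen, ⟨a, haM, hg⟩, ?_⟩
      exact lt_of_le_of_lt Cardinal.mk_image_le hMlt
    choose U hUo hUm hUlt using hnbhd
    obtain ⟨T, hTc, hTu⟩ := TopologicalSpace.isOpen_iUnion_countable U hUo
    have huniv : (⋃ w ∈ T, U w) = (Set.univ : Set ↥S) := by
      rw [hTu]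
      exact Set.eq_univ_of_forall (fun w => Set.mem_iUnion.2 ⟨w, hUm w⟩)
    have hT : #T ≤ ℵ₀ := Cardinal.mk_le_aleph0_iff.2 hTc
    have hcard : #(Set.univ : Set ↥S) < Cardinal.continuum := by
      rw [← huniv]
      have h1 : (⋃ w ∈ T, U w) = ⋃ w : T, U w := by
        rw [Set.biUnion_eq_iUnion]
      rw [h1]
      refine lt_of_le_of_lt (Cardinal.mk_iUnion_le _) ?_
      refine Cardinal.mul_lt_of_lt Cardinal.aleph0_le_continuum
        (lt_of_le_of_lt hT Cardinal.aleph0_lt_continuum) ?_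
      refine Ordinal.iSup_lt ?_ (fun w => hUlt w)
      exact lt_of_le_of_lt hT aleph0_lt_cof_continuum
    rw [Cardinal.mk_univ] at hcard
    exact hcard


lemma zeroDim (S : Set Cc) : IsTopologicalBasis {s : Set ↥S | IsClopen s} := by
  refine isTopologicalBasis_of_isOpen_of_nhds (fun u hu => hu.isOpen) ?_
  intro a u hau hu
  obtain ⟨U, hUopen, hUeq⟩ := (isOpen_induced_iff).1 hu
  have haU : (a : Cc) ∈ U := by rw [← hUeq] at hau; exact hau
  obtain ⟨V, hVclopen, haV, hVU⟩ :=
    isTopologicalBasis_isClopen.exists_subset_of_mem_open haU hUopen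
  refine ⟨Subtype.val ⁻¹' V, hVclopen.preimage continuous_subtype_val, haV, ?_⟩
  intro z hz
  rw [← hUeq]
  exact hVU hz

/-- transfer homogeneity along a homeomorphism -/
lemma homog_transfer {A B : Type*} [TopologicalSpace A] [TopologicalSpace B]
    (e : A ≃ₜ B) (h : ∀ x y : A, ∃ g : A ≃ₜ A, g x = y) :
    ∀ x y : B, ∃ g : B ≃ₜ B, g x = y := by
  intro x y
  obtain ⟨g, hg⟩ := h (e.symm x) (e.symm y)
  refine ⟨(e.symm.trans g).trans e, ?_⟩
  show e (g (e.symm x)) = y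
  rw [hg, e.apply_symm_apply]

/-- the image of a homogeneous subspace of a subspace is a homogeneous subspace -/
lemma homog_image {A : Set Cc} (Y : Set ↥A) (hY : HomogeneousSubspace Y) :
    HomogeneousSubspace ((fun y : ↥A => (y : Cc)) '' Y) := by
  set f : ↥Y → Cc := fun y => ((y : ↥A) : Cc) with hf
  have hemb : IsEmbedding f := IsEmbedding.subtypeVal.comp IsEmbedding.subtypeVal
  have hrange : Set.range f = (fun y : ↥A => (y : Cc)) '' Y := by
    rw [hf]
    ext x
    constructor
    · rintro ⟨y, rfl⟩; exact ⟨y.1, y.2, rfl⟩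
    · rintro ⟨y, hy, rfl⟩; exact ⟨⟨y, hy⟩, rfl⟩
  have e : ↥Y ≃ₜ ↥((fun y : ↥A => (y : Cc)) '' Y) :=
    (hemb.toHomeomorph).trans (Homeomorph.setCongr hrange)
  exact homog_transfer e hY

lemma mk_image_val {A : Set Cc} (Y : Set ↥A) :
    #((fun y : ↥A => (y : Cc)) '' Y) = #Y :=
  Cardinal.mk_image_eq (Subtype.val_injective)


end MVAux

/-- (Medini–Vidnyánszky, in ZFC) There exists a zero-dimensional separable metrizable
space, which may be taken to be a subspace of the Cantor space `2^ω`, that is not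
σ-homogeneous. -/



theorem exists_zero_dimensional_not_sigma_homogeneous :
    ∃ X : Set (ℕ → Bool),
      ZeroDimensionalSpace ↥X ∧ SeparableSpace ↥X ∧ MetrizableSpace ↥X ∧
      ¬ SigmaHomogeneous ↥X := by
  refine ⟨MVAux.Xset, MVAux.zeroDim _, inferInstance, inferInstance, ?_⟩
  rintro ⟨Y, hY, hYu⟩
  have hlt : ∀ n, Cardinal.mk ↥(Y n) < Cardinal.continuum := by
    intro n
    have h1 : HomogeneousSubspace ((fun y : ↥MVAux.Xset => (y : MVAux.Cc)) '' Y n) :=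
      MVAux.homog_image _ (hY n)
    have hsub : ((fun y : ↥MVAux.Xset => (y : MVAux.Cc)) '' Y n) ⊆ MVAux.Xset := by
      rintro x ⟨y, hy, rfl⟩; exact y.2
    have h2 := MVAux.homog_lt MVAux.Xset MVAux.bad_small _ hsub h1
    rwa [MVAux.mk_image_val] at h2
  have hle : Cardinal.mk (↥MVAux.Xset) < Cardinal.continuum := by
    have h0 : Cardinal.mk ↥(Set.univ : Set ↥MVAux.Xset) = Cardinal.mk (↥MVAux.Xset) := Cardinal.mk_univ
    rw [← h0, ← hYu]
    refine lt_of_le_of_lt (Cardinal.mk_iUnion_le _) ?_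
    refine Cardinal.mul_lt_of_lt Cardinal.aleph0_le_continuum ?_ ?_
    · rw [Cardinal.mk_nat]; exact Cardinal.aleph0_lt_continuum
    · refine Ordinal.iSup_lt ?_ hlt
      rw [Cardinal.mk_nat]; exact MVAux.aleph0_lt_cof_continuum
  rw [MVAux.mk_Xset] at hle
  exact absurd hle (lt_irrefl _)
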